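/- Let A be a finite cyclic group, q a prime, and n = q^r (r ≥ 1) a divisor of |A|. Let γ be a character of A of order n. Then the multiset of characters {γ·χ : χ a character of A of order n} consists of exactly φ(q^k) distinct characters of order q^k for each 0 ≤ k ≤ r−1, together with exactly (q−2)·q^{r−1} distinct characters of order q^r; equivalently, writing ρ_d for the direct sum of all characters of A of order d, one has γ ⊗ ρ_n = ((q−2)/(q−1)) ρ_n ⊕ ⊕_{j=0}^{r−1} ρ_{q^j}. -/

import Mathlib

set_option synthInstance.maxHeartbeats 1000000
set_option maxHeartbeats 1000000

set_option linter.unusedSectionVars false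
set_option linter.unusedVariables false

open Finset

section aux

variable {A : Type} [Group A] [IsCyclic A] [Finite A]

/-- The character group is finite. -/
lemma aux_finite : Finite (A →* ℂˣ) := by
  haveI : NeZero (Nat.card A) := ⟨Nat.card_pos.ne'⟩
  haveI : Finite (rootsOfUnity (Nat.card A) ℂ) := inferInstance
  have : ∀ χ : A →* ℂˣ, ∀ a : A, χ a ∈ rootsOfUnity (Nat.card A) ℂ := by
    intro χ a
    rw [mem_rootsOfUnity, ← map_pow, pow_card_eq_one']
    exact map_one χ
  exact Finite.of_injective
    (fun χ : A →* ℂˣ => fun a : A => (⟨χ a, this χ a⟩ : rootsOfUnity (Nat.card A) ℂ))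
    (by intro χ χ' h; ext a; exact congrArg (fun f => ((f a : ℂˣ) : ℂ)) h)

/-- The character group is cyclic. -/
lemma aux_cyclic : IsCyclic (A →* ℂˣ) := by
  have := aux_finite (A := A)
  obtain ⟨g, hg⟩ := IsCyclic.exists_generator (α := A)
  refine isCyclic_of_subgroup_isDomain (R := ℂ)
    ((Units.coeHom ℂ).comp ((MonoidHom.eval g) : (A →* ℂˣ) →* ℂˣ)) ?_
  intro χ χ' h
  have h' : χ g = χ' g := Units.ext h
  ext a
  obtain ⟨n, rfl⟩ := hg a
  simp [h']

/-- order of product when orders are q^r and q^k with k < r. -/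
lemma aux_order_mul {G : Type*} [CommGroup G] {q r k : ℕ} (hq : q.Prime) (hk : k < r)
    {a b : G} (ha : orderOf a = q ^ r) (hb : orderOf b = q ^ k) :
    orderOf (a * b) = q ^ r := by
  have hdvd : orderOf (a * b) ∣ q ^ r := by
    have := (Commute.all a b).orderOf_mul_dvd_lcm
    rw [ha, hb] at this
    exact this.trans (Nat.lcm_dvd dvd_rfl (pow_dvd_pow q hk.le))
  obtain ⟨m, hm, he⟩ := (Nat.dvd_prime_pow hq).mp hdvd
  rcases eq_or_lt_of_le hm with h | h
  · rw [he, h]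
  · exfalso
    have h1 : (a * b) ^ (q ^ (r - 1)) = 1 :=
      orderOf_dvd_iff_pow_eq_one.mp (by rw [he]; exact pow_dvd_pow q (by omega))
    have hb1 : b ^ (q ^ (r - 1)) = 1 :=
      orderOf_dvd_iff_pow_eq_one.mp (by rw [hb]; exact pow_dvd_pow q (by omega))
    rw [mul_pow, hb1, mul_one] at h1
    have h2 := orderOf_dvd_of_pow_eq_one h1
    rw [ha] at h2
    exact absurd (Nat.le_of_dvd (pow_pos hq.pos _) h2)
      (Nat.not_le.mpr (Nat.pow_lt_pow_right hq.one_lt (by omega)))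

lemma aux_sum_totient {q : ℕ} (hq : q.Prime) (r : ℕ) (hr : 1 ≤ r) :
    ∑ k ∈ range r, Nat.totient (q ^ k) = q ^ (r - 1) := by
  induction r with
  | zero => omega
  | succ n ih =>
    rcases Nat.eq_zero_or_pos n with rfl | hn
    · simp
    · rw [Finset.sum_range_succ, ih hn, Nat.totient_prime_pow hq hn]
      have h2 : 2 ≤ q := hq.two_le
      have : q ^ (n - 1) * q = q ^ n := by
        rw [← pow_succ]; congr 1; omega
      calc q ^ (n - 1) + q ^ (n - 1) * (q - 1) = q ^ (n - 1) * q := by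
            rw [Nat.mul_sub, mul_one]
            have : q ^ (n-1) ≤ q ^ (n-1) * q := Nat.le_mul_of_pos_right _ hq.pos
            omega
        _ = q ^ n := this
        _ = q ^ (n + 1 - 1) := by norm_num

end aux

/-- Let `A` be a finite cyclic group, `q` a prime and `n = q ^ r`
(`r ≥ 1`) a divisor of `|A|`.  Let `γ` be a character of `A` of order `n`.  Then the
multiset `{γ * χ : χ of order n}` consists of exactly `φ (q ^ k)` distinct characters of
order `q ^ k` for each `0 ≤ k ≤ r - 1`, together with exactly `(q - 2) * q ^ (r - 1)`
distinct characters of order `q ^ r`; in particular every member has order dividing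
`q ^ r`.  (Since `χ ↦ γ * χ` is injective, these multiset counts are cardinalities.) -/
theorem statement10 (A : Type) [Group A] [IsCyclic A] [Finite A]
    (q r : ℕ) (hq : q.Prime) (hr : 1 ≤ r) (hdvd : q ^ r ∣ Nat.card A)
    (γ : A →* ℂˣ) (hγ : orderOf γ = q ^ r) :
    (∀ χ : A →* ℂˣ, orderOf χ = q ^ r → orderOf (γ * χ) ∣ q ^ r) ∧
      (∀ k : ℕ, k ≤ r - 1 →
        Nat.card {χ : A →* ℂˣ // orderOf χ = q ^ r ∧ orderOf (γ * χ) = q ^ k} =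
          Nat.totient (q ^ k)) ∧
      Nat.card {χ : A →* ℂˣ // orderOf χ = q ^ r ∧ orderOf (γ * χ) = q ^ r} =
        (q - 2) * q ^ (r - 1) := by
  classical
  have hfin : Finite (A →* ℂˣ) := aux_finite
  have hcyc : IsCyclic (A →* ℂˣ) := aux_cyclic
  have hFT : Fintype (A →* ℂˣ) := Fintype.ofFinite _
  -- part 1
  have part1 : ∀ χ : A →* ℂˣ, orderOf χ = q ^ r → orderOf (γ * χ) ∣ q ^ r := by
    intro χ hχ
    have := (Commute.all γ χ).orderOf_mul_dvd_lcm
    rwa [hγ, hχ, Nat.lcm_self] at this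
  -- part 2
  have part2 : ∀ k : ℕ, k ≤ r - 1 →
      Nat.card {χ : A →* ℂˣ // orderOf χ = q ^ r ∧ orderOf (γ * χ) = q ^ k} =
        Nat.totient (q ^ k) := by
    intro k hk
    have hkr : k < r := by omega
    have e : {χ : A →* ℂˣ // orderOf χ = q ^ r ∧ orderOf (γ * χ) = q ^ k} ≃
        {ψ : A →* ℂˣ // orderOf ψ = q ^ k} :=
      { toFun := fun χ => ⟨γ * χ.1, χ.2.2⟩
        invFun := fun ψ => ⟨γ⁻¹ * ψ.1, by
          constructor
          · exact aux_order_mul hq hkr ((orderOf_inv γ).trans hγ) ψ.2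
          · have h : γ * (γ⁻¹ * ψ.1) = ψ.1 := by
              ext a
              simp
            rw [h]; exact ψ.2⟩
        left_inv := fun χ => by
          apply Subtype.ext
          ext a
          simp
        right_inv := fun ψ => by
          apply Subtype.ext
          ext a
          simp }
    rw [Nat.card_congr e, Nat.card_eq_fintype_card, Fintype.card_subtype,
      IsCyclic.card_orderOf_eq_totient]
    calc q ^ k ∣ q ^ r := pow_dvd_pow q hkr.le
      _ = orderOf γ := hγ.symm
      _ ∣ Fintype.card (A →* ℂˣ) := orderOf_dvd_card
  refine ⟨part1, part2, ?_⟩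
  -- part 3
  have hcard : ∀ m : ℕ,
      Nat.card {χ : A →* ℂˣ // orderOf χ = q ^ r ∧ orderOf (γ * χ) = q ^ m} =
        ((univ.filter fun χ : A →* ℂˣ => orderOf χ = q ^ r).filter
          fun χ => orderOf (γ * χ) = q ^ m).card := by
    intro m
    rw [Nat.card_eq_fintype_card, Fintype.card_subtype, Finset.filter_filter]
  set S : Finset (A →* ℂˣ) := univ.filter fun χ => orderOf χ = q ^ r with hS
  have hScard : S.card = Nat.totient (q ^ r) :=
    IsCyclic.card_orderOf_eq_totient (by rw [← hγ]; exact orderOf_dvd_card)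
  have hfib : S.card = ∑ k ∈ range (r + 1),
      (S.filter fun χ => orderOf (γ * χ) = q ^ k).card := by
    rw [Finset.card_eq_sum_card_fiberwise
      (f := fun χ : A →* ℂˣ => (orderOf (γ * χ)).factorization q) (t := range (r + 1)) ?_]
    · apply Finset.sum_congr rfl
      intro k hk
      congr 1
      apply Finset.filter_congr
      intro χ hχ
      have hχ' : orderOf χ = q ^ r := by simpa [hS] using hχ
      obtain ⟨m, hm, he⟩ := (Nat.dvd_prime_pow hq).mp (part1 χ hχ')
      rw [he]
      rw [Nat.Prime.factorization_pow hq]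
      simp only [Finsupp.single_eq_same]
      constructor
      · rintro rfl; rfl
      · intro h; exact Nat.pow_right_injective hq.two_le h.symm ▸ rfl
    · intro χ hχ
      have hχ' : orderOf χ = q ^ r := by simpa [hS] using hχ
      obtain ⟨m, hm, he⟩ := (Nat.dvd_prime_pow hq).mp (part1 χ hχ')
      simp only [mem_range]
      rw [he, Nat.Prime.factorization_pow hq]
      simp only [Finsupp.single_eq_same, Finset.mem_coe, mem_range]
      omega
  rw [Finset.sum_range_succ] at hfib
  have hsum : ∑ k ∈ range r, (S.filter fun χ => orderOf (γ * χ) = q ^ k).card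
      = q ^ (r - 1) := by
    rw [← aux_sum_totient hq r hr]
    apply Finset.sum_congr rfl
    intro k hk
    rw [mem_range] at hk
    rw [← part2 k (by omega), hcard k, hS, Finset.filter_filter]
  have htot : Nat.totient (q ^ r) = q ^ (r - 1) * (q - 1) := Nat.totient_prime_pow hq hr
  have hq2 : 2 ≤ q := hq.two_le
  have hmul : q ^ (r - 1) * (q - 1) = q ^ (r - 1) * (q - 2) + q ^ (r - 1) := by
    rw [Nat.mul_sub, Nat.mul_sub, mul_one]
    have h1 : q ^ (r-1) * 2 ≤ q ^ (r-1) * q := Nat.mul_le_mul_left _ hq2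
    have h2 : q ^ (r-1) ≤ q ^ (r-1) * q := Nat.le_mul_of_pos_right _ hq.pos
    omega
  rw [hScard, htot, hsum] at hfib
  rw [hcard r, Nat.mul_comm (q - 2) (q ^ (r - 1))]
  omega
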